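/- arXiv:2401.03170 — 4 statements merged into one kernel-verified Lean document; each statement's English description precedes it below -/
import Mathlib

section
/- In the Gaussian feature model with labels y ∈ {1,-1} uniformly distributed (η = 1/2), common variance σ² for both feature blocks, and test-domain features z_d ~ N(y·w_d·μ_d, σ²I), z_s ~ N(y·w_s·γ·μ_s, σ²I), the expected test-domain 0-1 risk of the training-domain Bayes classifier composed with featurizer Φ_{(w_d,w_s)} equals F(-(1/σ)·(w_d²‖μ_d‖₂² + γ·w_s²‖μ_s‖₂²)/√(w_d²‖μ_d‖₂² + w_s²‖μ_s‖₂²)), where F is the standard normal CDF. -/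
open MeasureTheory ProbabilityTheory

/-- The CDF of the standard normal distribution `N(0,1)`. -/
noncomputable def stdNormalCDF (t : ℝ) : ℝ :=
  ((gaussianReal 0 1) (Set.Iic t)).toReal

/-- Test-domain feature distribution given label `y`: `z_d ~ N(y·w_d·μ_d, σ²I)` and
`z_s ~ N(y·w_s·γ·μ_s, σ²I)` independent. -/
noncomputable def testMeasure (pd ps : ℕ) (μd : EuclideanSpace ℝ (Fin pd))
    (μs : EuclideanSpace ℝ (Fin ps)) (wd ws σ γ : ℝ) (y : ℝ) :
    Measure ((Fin pd → ℝ) × (Fin ps → ℝ)) :=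
  (Measure.pi fun i => gaussianReal (y * wd * μd i) ⟨σ ^ 2, sq_nonneg σ⟩).prod
    (Measure.pi fun i => gaussianReal (y * ws * γ * μs i) ⟨σ ^ 2, sq_nonneg σ⟩)

namespace RiskAux

open Real
open scoped NNReal ENNReal

/-! ### Convolution of Gaussian measures -/

lemma conv_pdf_real (m1 m2 t y : ℝ) {a b : ℝ} (ha : 0 < a) (hb : 0 < b) :
    ((√(2*π*a))⁻¹ * rexp (-(t - y - m1)^2/(2*a))) * ((√(2*π*b))⁻¹ * rexp (-(y-m2)^2/(2*b)))
    = ((√(2*π*(a+b)))⁻¹ * rexp (-(t-(m1+m2))^2/(2*(a+b))))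
      * ((√(2*π*(a*b/(a+b))))⁻¹ * rexp (-(y - (b*(t-m1)+a*m2)/(a+b))^2/(2*(a*b/(a+b))))) := by
  have hab : 0 < a + b := by linarith
  have hpi := Real.pi_pos
  have hc : (√(2*π*a))⁻¹ * (√(2*π*b))⁻¹ = (√(2*π*(a+b)))⁻¹ * (√(2*π*(a*b/(a+b))))⁻¹ := by
    rw [← mul_inv, ← mul_inv, ← Real.sqrt_mul (by positivity), ← Real.sqrt_mul (by positivity)]
    congr 2
    field_simp
  have he : rexp (-(t - y - m1)^2/(2*a)) * rexp (-(y-m2)^2/(2*b))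
      = rexp (-(t-(m1+m2))^2/(2*(a+b)))
        * rexp (-(y - (b*(t-m1)+a*m2)/(a+b))^2/(2*(a*b/(a+b)))) := by
    rw [← Real.exp_add, ← Real.exp_add]
    congr 1
    field_simp
    ring
  calc ((√(2*π*a))⁻¹ * rexp (-(t - y - m1)^2/(2*a)))
        * ((√(2*π*b))⁻¹ * rexp (-(y-m2)^2/(2*b)))
      = ((√(2*π*a))⁻¹ * (√(2*π*b))⁻¹)
        * (rexp (-(t - y - m1)^2/(2*a)) * rexp (-(y-m2)^2/(2*b))) := by ring
    _ = _ := by rw [hc, he]; ring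

lemma conv_pdf (m1 m2 t y : ℝ) {v1 v2 : ℝ≥0} (h1 : v1 ≠ 0) (h2 : v2 ≠ 0) :
    gaussianPDF m1 v1 (t - y) * gaussianPDF m2 v2 y
    = gaussianPDF (m1 + m2) (v1 + v2) t
      * gaussianPDF (((v2:ℝ)*(t-m1)+(v1:ℝ)*m2)/((v1:ℝ)+(v2:ℝ)))
          (NNReal.mk ((v1:ℝ)*(v2:ℝ)/((v1:ℝ)+(v2:ℝ)))
            (div_nonneg (mul_nonneg v1.coe_nonneg v2.coe_nonneg)
              (add_nonneg v1.coe_nonneg v2.coe_nonneg))) y := by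
  have ha : 0 < (v1:ℝ) := by exact_mod_cast pos_iff_ne_zero.mpr h1
  have hb : 0 < (v2:ℝ) := by exact_mod_cast pos_iff_ne_zero.mpr h2
  simp only [gaussianPDF, gaussianPDFReal]
  rw [← ENNReal.ofReal_mul (by positivity), ← ENNReal.ofReal_mul (by positivity)]
  congr 1
  have := conv_pdf_real m1 m2 t y ha hb
  push_cast
  convert this using 4
  all_goals rfl

lemma gaussianReal_conv (m1 m2 : ℝ) (v1 v2 : ℝ≥0) :
    ((gaussianReal m1 v1).prod (gaussianReal m2 v2)).map (fun p : ℝ × ℝ => p.1 + p.2)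
      = gaussianReal (m1 + m2) (v1 + v2) := by
  by_cases h1 : v1 = 0
  · subst h1
    rw [gaussianReal_zero_var, Measure.dirac_prod, Measure.map_map (by fun_prop) (by fun_prop)]
    have : ((fun p : ℝ × ℝ => p.1 + p.2) ∘ Prod.mk m1) = (fun y => m1 + y) := rfl
    rw [this, gaussianReal_map_const_add, add_comm m2 m1, zero_add]
  by_cases h2 : v2 = 0
  · subst h2
    rw [gaussianReal_zero_var, Measure.prod_dirac, Measure.map_map (by fun_prop) (by fun_prop)]
    have : ((fun p : ℝ × ℝ => p.1 + p.2) ∘ (fun x => (x, m2))) = (fun x => x + m2) := rfl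
    rw [this, gaussianReal_map_add_const, add_zero]
  -- nondegenerate case
  have h12 : v1 + v2 ≠ 0 := by simp [h1, h2]
  set f := gaussianPDF m1 v1 with hf
  set g := gaussianPDF m2 v2 with hg
  have hfm : Measurable f := measurable_gaussianPDF _ _
  have hgm : Measurable g := measurable_gaussianPDF _ _
  ext s hs
  set I : ℝ → ℝ≥0∞ := s.indicator (fun _ => 1) with hI
  have hIm : Measurable I := measurable_const.indicator hs
  rw [Measure.map_apply (by fun_prop) hs,
    gaussianReal_of_var_ne_zero m1 h1, gaussianReal_of_var_ne_zero m2 h2,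
    gaussianReal_of_var_ne_zero (m1 + m2) h12]
  rw [withDensity_apply _ hs]
  have hsm : MeasurableSet ((fun p : ℝ × ℝ => p.1 + p.2) ⁻¹' s) :=
    (by fun_prop : Measurable fun p : ℝ × ℝ => p.1 + p.2) hs
  rw [Measure.prod_apply hsm]
  have hstep1 : ∀ x : ℝ,
      (volume.withDensity g) (Prod.mk x ⁻¹' ((fun p : ℝ × ℝ => p.1 + p.2) ⁻¹' s))
        = ∫⁻ y, I (x + y) * g y := by
    intro x
    have hpre : Prod.mk x ⁻¹' ((fun p : ℝ × ℝ => p.1 + p.2) ⁻¹' s)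
        = (fun y => x + y) ⁻¹' s := rfl
    rw [hpre, withDensity_apply _ (measurable_const_add x hs),
      ← lintegral_indicator (measurable_const_add x hs)]
    congr 1 with y
    by_cases hy : x + y ∈ s <;> simp [hI, Set.indicator, hy, Set.mem_preimage]
  calc ∫⁻ x, (volume.withDensity g) (Prod.mk x ⁻¹' ((fun p : ℝ × ℝ => p.1 + p.2) ⁻¹' s))
        ∂(volume.withDensity f)
      = ∫⁻ x, (∫⁻ y, I (x + y) * g y) ∂(volume.withDensity f) := by
        simp_rw [hstep1]
    _ = ∫⁻ x, f x * ∫⁻ y, I (x + y) * g y := by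
        rw [lintegral_withDensity_eq_lintegral_mul _ hfm]
        · rfl
        · exact Measurable.lintegral_prod_right (f := fun x y => I (x + y) * g y)
            (((hIm.comp measurable_add).mul (hgm.comp measurable_snd)))
    _ = ∫⁻ x, ∫⁻ y, f x * (I (x + y) * g y) := by
        congr 1 with x
        rw [lintegral_const_mul _
          (by exact (hIm.comp (measurable_const_add x)).mul hgm :
            Measurable fun y => I (x + y) * g y)]
    _ = ∫⁻ y, ∫⁻ x, f x * (I (x + y) * g y) := by
        rw [lintegral_lintegral_swap]
        exact (((hfm.comp measurable_fst).mul
          ((hIm.comp measurable_add).mul (hgm.comp measurable_snd)))).aemeasurable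
    _ = ∫⁻ y, ∫⁻ x, (fun t => f (t - y) * (I t * g y)) (x + y) := by
        congr 1 with y
        congr 1 with x
        simp
    _ = ∫⁻ y, ∫⁻ t, f (t - y) * (I t * g y) := by
        congr 1 with y
        have := lintegral_add_right_eq_self (μ := volume)
          (fun t => f (t - y) * (I t * g y)) y
        simpa using this
    _ = ∫⁻ t, ∫⁻ y, f (t - y) * (I t * g y) := by
        rw [lintegral_lintegral_swap]
        apply Measurable.aemeasurable
        exact ((hfm.comp (measurable_snd.sub measurable_fst)).mul
          ((hIm.comp measurable_snd).mul (hgm.comp measurable_fst)))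
    _ = ∫⁻ t, I t * ∫⁻ y, f (t - y) * g y := by
        congr 1 with t
        rw [← lintegral_const_mul _
          (by exact (hfm.comp (measurable_id.const_sub t)).mul hgm :
            Measurable fun y => f (t - y) * g y)]
        congr 1 with y
        ring
    _ = ∫⁻ t, I t * gaussianPDF (m1 + m2) (v1 + v2) t := by
        congr 1 with t
        congr 1
        have : ∀ y, f (t - y) * g y = gaussianPDF (m1 + m2) (v1 + v2) t
            * gaussianPDF (((v2:ℝ)*(t-m1)+(v1:ℝ)*m2)/((v1:ℝ)+(v2:ℝ)))
              (NNReal.mk ((v1:ℝ)*(v2:ℝ)/((v1:ℝ)+(v2:ℝ)))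
                (div_nonneg (mul_nonneg v1.coe_nonneg v2.coe_nonneg)
                  (add_nonneg v1.coe_nonneg v2.coe_nonneg))) y :=
          fun y => conv_pdf m1 m2 t y h1 h2
        simp_rw [this]
        rw [lintegral_const_mul _ (measurable_gaussianPDF _ _),
          lintegral_gaussianPDF_eq_one _ (by
            simp only [ne_eq, ← NNReal.coe_eq_zero]
            push_cast
            have ha : 0 < (v1:ℝ) := by exact_mod_cast pos_iff_ne_zero.mpr h1
            have hb : 0 < (v2:ℝ) := by exact_mod_cast pos_iff_ne_zero.mpr h2
            positivity), mul_one]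
    _ = ∫⁻ t in s, gaussianPDF (m1 + m2) (v1 + v2) t := by
        rw [← lintegral_indicator hs]
        congr 1 with t
        by_cases ht : t ∈ s <;> simp [hI, Set.indicator, ht]

/-! ### Weighted sums of independent Gaussians -/

lemma measurable_wsum {n : ℕ} (a : Fin n → ℝ) :
    Measurable (fun z : Fin n → ℝ => ∑ i, a i * z i) :=
  by fun_prop

lemma pi_gaussian_wsum : ∀ (n : ℕ) (a m : Fin n → ℝ) (v : Fin n → ℝ≥0),
    (Measure.pi fun i => gaussianReal (m i) (v i)).map (fun z => ∑ i, a i * z i)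
      = gaussianReal (∑ i, a i * m i) (∑ i, (Real.nnabs (a i))^2 * v i) := by
  intro n
  induction n with
  | zero =>
    intro a m v
    simp only [Finset.univ_eq_empty, Finset.sum_empty]
    rw [show (fun z : Fin 0 → ℝ => (0:ℝ)) = fun _ => (0:ℝ) from rfl, Measure.map_const,
      measure_univ, one_smul, gaussianReal_zero_var]
  | succ n ih =>
    intro a m v
    set μ : Fin (n+1) → Measure ℝ := fun i => gaussianReal (m i) (v i) with hμ
    have hmp := measurePreserving_piFinSuccAbove μ 0
    set e := MeasurableEquiv.piFinSuccAbove (fun _ : Fin (n+1) => ℝ) 0 with he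
    have hmap : (Measure.pi μ).map (fun z => ∑ i, a i * z i)
        = ((μ 0).prod (Measure.pi fun j => μ ((0:Fin (n+1)).succAbove j))).map
            (fun p : ℝ × (Fin n → ℝ) =>
              a 0 * p.1 + ∑ j, a ((0:Fin (n+1)).succAbove j) * p.2 j) := by
      rw [← hmp.map_eq, Measure.map_map (by
        exact (measurable_const_mul _).comp measurable_fst |>.add
          ((measurable_wsum _).comp measurable_snd)) e.measurable]
      congr 1 with z
      simp only [Function.comp_apply]
      rw [Fin.sum_univ_succAbove (fun i => a i * z i) 0]
      rfl
    rw [hmap]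
    have hsplit : (fun p : ℝ × (Fin n → ℝ) =>
          a 0 * p.1 + ∑ j, a ((0:Fin (n+1)).succAbove j) * p.2 j)
        = (fun q : ℝ × ℝ => q.1 + q.2) ∘
          (Prod.map (fun x => a 0 * x)
            (fun w : Fin n → ℝ => ∑ j, a ((0:Fin (n+1)).succAbove j) * w j)) := rfl
    rw [hsplit, ← Measure.map_map (by fun_prop)
      ((measurable_const_mul _).prodMap (measurable_wsum _)),
      ← Measure.map_prod_map _ _ (measurable_const_mul _) (measurable_wsum _)]
    rw [hμ]
    rw [gaussianReal_map_const_mul (μ := m 0) (v := v 0) (a 0)]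
    have hnn : (NNReal.mk ((a 0)^2) (sq_nonneg _) : ℝ≥0) = (Real.nnabs (a 0))^2 := by
      apply Subtype.ext
      show (a 0)^2 = ((Real.nnabs (a 0) ^ 2 : ℝ≥0) : ℝ)
      rw [NNReal.coe_pow, Real.coe_nnabs, sq_abs]
    rw [hnn]
    rw [ih (fun j => a ((0:Fin (n+1)).succAbove j)) (fun j => m ((0:Fin (n+1)).succAbove j))
      (fun j => v ((0:Fin (n+1)).succAbove j))]
    rw [gaussianReal_conv]
    rw [Fin.sum_univ_succAbove (fun i => a i * m i) 0,
      Fin.sum_univ_succAbove (fun i => (Real.nnabs (a i))^2 * v i) 0]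

/-! ### Standard normal CDF facts -/

lemma stdN_neg : (gaussianReal 0 1).map (fun x : ℝ => -x) = gaussianReal 0 1 := by
  rw [show (fun x : ℝ => -x) = ((-1 : ℝ) * ·) from funext fun x => (neg_one_mul x).symm,
    gaussianReal_map_const_mul]
  norm_num

lemma meas_union_null' {α : Type*} {_ : MeasurableSpace α} {μ : Measure α} {s t : Set α}
    (ht : μ t = 0) : μ (s ∪ t) = μ s :=
  le_antisymm ((measure_union_le s t).trans (by simp [ht]))
    (measure_mono Set.subset_union_left)

lemma stdN_singleton (u : ℝ) : (gaussianReal 0 1) {u} = 0 :=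
  gaussianReal_absolutelyContinuous 0 one_ne_zero (measure_singleton u)

lemma stdN_Iio (u : ℝ) : (gaussianReal 0 1) (Set.Iio u) = (gaussianReal 0 1) (Set.Iic u) := by
  rw [← Set.Iio_union_right, meas_union_null' (stdN_singleton u)]

lemma stdN_Ici (u : ℝ) : (gaussianReal 0 1) (Set.Ici u) = (gaussianReal 0 1) (Set.Iic (-u)) := by
  conv_lhs => rw [← stdN_neg]
  rw [Measure.map_apply (by fun_prop) measurableSet_Ici]
  congr 1
  ext x
  simp only [Set.mem_preimage, Set.mem_Ici, Set.mem_Iic]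
  constructor <;> intro h <;> linarith

lemma gaussianReal_eq_map (M : ℝ) {V : ℝ≥0} (_hV : V ≠ 0) :
    gaussianReal M V = (gaussianReal 0 1).map (fun x => Real.sqrt V * x + M) := by
  have hc : (NNReal.mk ((Real.sqrt V)^2) (sq_nonneg _) : ℝ≥0) * 1 = V := by
    apply Subtype.ext
    show (Real.sqrt V)^2 * ((1:ℝ≥0):ℝ) = (V:ℝ)
    rw [Real.sq_sqrt V.coe_nonneg]; norm_num
  have h1 : (gaussianReal 0 1).map (fun x => Real.sqrt V * x) = gaussianReal 0 V := by
    rw [show (fun x : ℝ => Real.sqrt V * x) = ((Real.sqrt V) * ·) from rfl,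
      gaussianReal_map_const_mul, mul_zero, hc]
  have h2 := gaussianReal_map_add_const (μ := 0) (v := V) M
  rw [← h1, Measure.map_map (by fun_prop) (by fun_prop)] at h2
  rw [zero_add] at h2
  rw [← h2]
  rfl

lemma gauss_Iio (M t : ℝ) {V : ℝ≥0} (hV : V ≠ 0) :
    (gaussianReal M V) (Set.Iio t)
      = (gaussianReal 0 1) (Set.Iic ((t - M) / Real.sqrt V)) := by
  have hs : (0:ℝ) < Real.sqrt V := Real.sqrt_pos.mpr (by positivity)
  rw [gaussianReal_eq_map M hV, Measure.map_apply (by fun_prop) measurableSet_Iio]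
  rw [show (fun x => Real.sqrt V * x + M) ⁻¹' Set.Iio t = Set.Iio ((t - M) / Real.sqrt V) by
    ext x
    simp only [Set.mem_preimage, Set.mem_Iio, lt_div_iff₀ hs]
    constructor <;> intro h <;> nlinarith]
  exact stdN_Iio _

lemma gauss_Ici (M t : ℝ) {V : ℝ≥0} (hV : V ≠ 0) :
    (gaussianReal M V) (Set.Ici t)
      = (gaussianReal 0 1) (Set.Iic (-((t - M) / Real.sqrt V))) := by
  have hs : (0:ℝ) < Real.sqrt V := Real.sqrt_pos.mpr (by positivity)
  rw [gaussianReal_eq_map M hV, Measure.map_apply (by fun_prop) measurableSet_Ici]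
  rw [show (fun x => Real.sqrt V * x + M) ⁻¹' Set.Ici t = Set.Ici ((t - M) / Real.sqrt V) by
    ext x
    simp only [Set.mem_preimage, Set.mem_Ici, div_le_iff₀ hs]
    constructor <;> intro h <;> nlinarith]
  exact stdN_Ici _

lemma stdNormalCDF_zero' : ((gaussianReal 0 1) (Set.Iic (0:ℝ))).toReal = 1 / 2 := by
  have hs : (gaussianReal 0 1) (Set.Iic 0) = (gaussianReal 0 1) (Set.Ici 0) := by
    rw [stdN_Ici, neg_zero]
  have hIoi : (gaussianReal 0 1) (Set.Ici 0) = (gaussianReal 0 1) (Set.Ioi 0) := by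
    rw [← Set.Ioi_union_left, meas_union_null' (stdN_singleton 0)]
  have htot : (gaussianReal 0 1) (Set.Iic 0) + (gaussianReal 0 1) (Set.Ioi 0) = 1 := by
    have h := measure_add_measure_compl (μ := gaussianReal 0 1) (measurableSet_Iic (a := (0:ℝ)))
    rwa [measure_univ, Set.compl_Iic] at h
  rw [hs, hIoi] at htot
  have h2 : (2:ℝ≥0∞) * (gaussianReal 0 1) (Set.Ioi 0) = 1 := by rw [two_mul]; exact htot
  have : (gaussianReal 0 1) (Set.Iic 0) = 1/2 := by
    rw [hs, hIoi, ENNReal.eq_div_iff (by norm_num) (by norm_num), h2]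
  rw [this]
  simp [ENNReal.toReal_div]

end RiskAux

open RiskAux Real
open scoped NNReal ENNReal

/-- Expected test-domain 0-1 risk (with `η = 1/2` and common variance `σ²`) of the
training-domain Bayes classifier on top of the featurizer `Φ_{(w_d,w_s)}` equals
`F(-(1/σ)·(w_d²‖μ_d‖² + γ w_s²‖μ_s‖²)/√(w_d²‖μ_d‖² + w_s²‖μ_s‖²))`. -/
theorem expected_test_domain_risk
    (pd ps : ℕ) (μd : EuclideanSpace ℝ (Fin pd)) (μs : EuclideanSpace ℝ (Fin ps))
    (wd ws σ γ : ℝ) (hσ : 0 < σ)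
    (hwd : wd ∈ Set.Icc (0 : ℝ) 1) (hws : ws ∈ Set.Icc (0 : ℝ) 1)
    (hw : (wd, ws) ≠ (0, 0)) :
    (1 / 2) * ((testMeasure pd ps μd μs wd ws σ γ 1)
        {z | (2 * wd / σ ^ 2) * (∑ i, μd i * z.1 i)
            + (2 * ws / σ ^ 2) * (∑ i, μs i * z.2 i) < 0}).toReal
      + (1 / 2) * ((testMeasure pd ps μd μs wd ws σ γ (-1))
        {z | 0 ≤ (2 * wd / σ ^ 2) * (∑ i, μd i * z.1 i)
            + (2 * ws / σ ^ 2) * (∑ i, μs i * z.2 i)}).toReal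
      = stdNormalCDF (-(1 / σ) * ((wd ^ 2 * ‖μd‖ ^ 2 + γ * ws ^ 2 * ‖μs‖ ^ 2)
          / Real.sqrt (wd ^ 2 * ‖μd‖ ^ 2 + ws ^ 2 * ‖μs‖ ^ 2))) := by
  have hσ0 : σ ≠ 0 := ne_of_gt hσ
  set cd : ℝ := 2 * wd / σ ^ 2 with hcd
  set cs : ℝ := 2 * ws / σ ^ 2 with hcs
  set T : (Fin pd → ℝ) × (Fin ps → ℝ) → ℝ :=
    fun z => cd * (∑ i, μd i * z.1 i) + cs * (∑ i, μs i * z.2 i) with hT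
  have hTm : Measurable T :=
    (((measurable_wsum μd).comp measurable_fst).const_mul cd).add
      (((measurable_wsum μs).comp measurable_snd).const_mul cs)
  have hnd : ‖μd‖ ^ 2 = ∑ i, μd i ^ 2 := by
    rw [EuclideanSpace.norm_eq, Real.sq_sqrt (by positivity)]
    simp [Real.norm_eq_abs, sq_abs]
  have hns : ‖μs‖ ^ 2 = ∑ i, μs i ^ 2 := by
    rw [EuclideanSpace.norm_eq, Real.sq_sqrt (by positivity)]
    simp [Real.norm_eq_abs, sq_abs]
  set A : ℝ := wd ^ 2 * ‖μd‖ ^ 2 with hA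
  set B : ℝ := ws ^ 2 * ‖μs‖ ^ 2 with hB
  have hA0 : 0 ≤ A := by rw [hA]; positivity
  have hB0 : 0 ≤ B := by rw [hB]; positivity
  set v₀ : ℝ≥0 := ⟨σ ^ 2, sq_nonneg σ⟩ with hv₀
  set V : ℝ≥0 := (∑ i, (Real.nnabs (cd * μd i))^2 * v₀)
      + ∑ i, (Real.nnabs (cs * μs i))^2 * v₀ with hV
  have hVr : (V : ℝ) = (2/σ)^2 * (A + B) := by
    rw [hV]
    push_cast
    simp only [show ((v₀:ℝ)) = σ^2 from rfl]
    have e1 : ∀ i, |cd * μd i| ^ 2 * (σ^2 : ℝ) = ((2/σ)^2 * wd^2) * μd i ^ 2 := by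
      intro i; rw [sq_abs, hcd]; field_simp
    have e2 : ∀ i, |cs * μs i| ^ 2 * (σ^2 : ℝ) = ((2/σ)^2 * ws^2) * μs i ^ 2 := by
      intro i; rw [sq_abs, hcs]; field_simp
    calc (∑ i, (|cd * μd i|:ℝ)^2 * σ^2) + ∑ i, (|cs * μs i|:ℝ)^2 * σ^2
        = (∑ i, ((2/σ)^2 * wd^2) * μd i ^ 2) + ∑ i, ((2/σ)^2 * ws^2) * μs i ^ 2 := by
          rw [Finset.sum_congr rfl (fun i _ => e1 i), Finset.sum_congr rfl (fun i _ => e2 i)]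
      _ = (2/σ)^2 * (A + B) := by
          rw [← Finset.mul_sum, ← Finset.mul_sum, hA, hB, hnd, hns]; ring
  have hTmap : ∀ y : ℝ, (testMeasure pd ps μd μs wd ws σ γ y).map T
      = gaussianReal (y * ((2/σ^2) * (A + γ * B))) V := by
    intro y
    rw [testMeasure]
    have hsplit : T = (fun q : ℝ × ℝ => q.1 + q.2) ∘
        (Prod.map (fun w : Fin pd → ℝ => ∑ i, (cd * μd i) * w i)
          (fun w : Fin ps → ℝ => ∑ i, (cs * μs i) * w i)) := by
      funext z
      simp only [hT, Function.comp_apply, Prod.map, Finset.mul_sum]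
      congr 1 <;> exact Finset.sum_congr rfl fun i _ => by ring
    haveI : SFinite (Measure.pi fun i => gaussianReal (y * wd * μd i) ⟨σ ^ 2, sq_nonneg σ⟩) :=
      inferInstanceAs (SFinite (Measure.pi fun i =>
        gaussianReal (y * wd * μd i) (NNReal.mk (σ ^ 2) (sq_nonneg σ))))
    haveI : SFinite (Measure.pi fun i => gaussianReal (y * ws * γ * μs i) ⟨σ ^ 2, sq_nonneg σ⟩) :=
      inferInstanceAs (SFinite (Measure.pi fun i =>
        gaussianReal (y * ws * γ * μs i) (NNReal.mk (σ ^ 2) (sq_nonneg σ))))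
    rw [hsplit, ← Measure.map_map (by fun_prop)
        ((measurable_wsum _).prodMap (measurable_wsum _)),
      ← Measure.map_prod_map _ _ (measurable_wsum _) (measurable_wsum _),
      pi_gaussian_wsum pd (fun i => cd * μd i) (fun i => y * wd * μd i) (fun _ => v₀),
      pi_gaussian_wsum ps (fun i => cs * μs i) (fun i => y * ws * γ * μs i) (fun _ => v₀),
      gaussianReal_conv]
    rw [hV]
    congr 1
    have e1 : ∀ i, (cd * μd i) * (y * wd * μd i) = (y * (2/σ^2) * wd^2) * μd i ^ 2 := by
      intro i; rw [hcd]; field_simp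
    have e2 : ∀ i, (cs * μs i) * (y * ws * γ * μs i) = (y * (2/σ^2) * γ * ws^2) * μs i ^ 2 := by
      intro i; rw [hcs]; field_simp
    calc (∑ i, (cd * μd i) * (y * wd * μd i)) + ∑ i, (cs * μs i) * (y * ws * γ * μs i)
        = (∑ i, (y * (2/σ^2) * wd^2) * μd i ^ 2)
          + ∑ i, (y * (2/σ^2) * γ * ws^2) * μs i ^ 2 := by
          rw [Finset.sum_congr rfl (fun i _ => e1 i), Finset.sum_congr rfl (fun i _ => e2 i)]
      _ = y * ((2/σ^2) * (A + γ * B)) := by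
          rw [← Finset.mul_sum, ← Finset.mul_sum, hA, hB, hnd, hns]; ring
  have hset1 : {z : (Fin pd → ℝ) × (Fin ps → ℝ) |
      cd * (∑ i, μd i * z.1 i) + cs * (∑ i, μs i * z.2 i) < 0} = T ⁻¹' (Set.Iio 0) := rfl
  have hset2 : {z : (Fin pd → ℝ) × (Fin ps → ℝ) |
      0 ≤ cd * (∑ i, μd i * z.1 i) + cs * (∑ i, μs i * z.2 i)} = T ⁻¹' (Set.Ici 0) := rfl
  rw [hset1, hset2, ← Measure.map_apply hTm measurableSet_Iio,
    ← Measure.map_apply hTm measurableSet_Ici, hTmap 1, hTmap (-1)]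
  by_cases hAB : A + B = 0
  · -- degenerate case : the statistic is a.s. zero
    have hA' : A = 0 := by linarith [hB0, hA0]
    have hB' : B = 0 := by linarith [hB0, hA0]
    have hV0 : V = 0 := by
      have : (V:ℝ) = 0 := by rw [hVr, hAB]; ring
      exact_mod_cast this
    have hM : ∀ y : ℝ, y * ((2/σ^2) * (A + γ * B)) = 0 := by
      intro y; rw [hA', hB']; ring
    have harg : -(1 / σ) * ((A + γ * B) / Real.sqrt (A + B)) = 0 := by
      rw [hA', hB']; norm_num
    rw [hM 1, hM (-1), hV0, gaussianReal_zero_var,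
      Measure.dirac_apply' _ measurableSet_Iio, Measure.dirac_apply' _ measurableSet_Ici,
      show A + γ * ws ^ 2 * ‖μs‖ ^ 2 = A + γ * B from by rw [hB]; ring,
      harg, stdNormalCDF, stdNormalCDF_zero']
    simp [Set.indicator]
  · -- nondegenerate case
    have hABpos : 0 < A + B := lt_of_le_of_ne (by linarith) (Ne.symm hAB)
    have hVne : V ≠ 0 := by
      intro h
      rw [h] at hVr
      simp only [NNReal.coe_zero] at hVr
      have : (0:ℝ) < (2/σ)^2 * (A + B) := by positivity
      linarith
    have hsqV : Real.sqrt (V:ℝ) = (2/σ) * Real.sqrt (A + B) := by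
      rw [hVr, Real.sqrt_mul (by positivity), Real.sqrt_sq (by positivity)]
    have hsp : 0 < Real.sqrt (A + B) := Real.sqrt_pos.mpr hABpos
    set R : ℝ := -(1 / σ) * ((A + γ * B) / Real.sqrt (A + B)) with hR
    have harg1 : (0 - 1 * ((2/σ^2) * (A + γ * B))) / Real.sqrt (V:ℝ) = R := by
      rw [hsqV, hR]; field_simp; ring
    have harg2 : -((0 - (-1) * ((2/σ^2) * (A + γ * B))) / Real.sqrt (V:ℝ)) = R := by
      rw [hsqV, hR]; field_simp; ring
    rw [gauss_Iio _ 0 hVne, gauss_Ici _ 0 hVne, harg1, harg2, stdNormalCDF,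
      show A + γ * ws ^ 2 * ‖μs‖ ^ 2 = A + γ * B from by rw [hB]; ring, ← hR]
    ring
end

section
/- If γ < 0, then for all w_s ∈ (0,1], the test-domain risk R(1, w_s) := F(-(1/σ)·(‖μ_d‖₂² + γ·w_s²‖μ_s‖₂²)/√(‖μ_d‖₂² + w_s²‖μ_s‖₂²)) satisfies R(1, w_s) ≥ R(1, 0) = F(-‖μ_d‖₂/σ). That is, the invariant featurizer that completely suppresses the silent feature minimizes the test risk among featurizers of the form Φ_{(1, w_s)}. -/
open MeasureTheory ProbabilityTheory

/-- If `γ < 0`, then for all `w_s ∈ (0,1]`, the test-domain risk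
`R(1, w_s) = F(-(1/σ)·(‖μ_d‖² + γ w_s²‖μ_s‖²)/√(‖μ_d‖² + w_s²‖μ_s‖²))` satisfies
`R(1, w_s) ≥ R(1, 0) = F(-‖μ_d‖/σ)`: the invariant featurizer is optimal. -/
theorem invariant_optimal_of_gamma_neg
    (pd ps : ℕ) (μd : EuclideanSpace ℝ (Fin pd)) (μs : EuclideanSpace ℝ (Fin ps))
    (σ γ : ℝ) (hσ : 0 < σ) (hμd : μd ≠ 0) (hγ : γ < 0) :
    ∀ ws ∈ Set.Ioc (0 : ℝ) 1,
      stdNormalCDF (-‖μd‖ / σ)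
        ≤ stdNormalCDF (-(1 / σ) * ((‖μd‖ ^ 2 + γ * ws ^ 2 * ‖μs‖ ^ 2)
            / Real.sqrt (‖μd‖ ^ 2 + ws ^ 2 * ‖μs‖ ^ 2))) := by
  intro ws hws
  have hmono : ∀ s t : ℝ, s ≤ t → stdNormalCDF s ≤ stdNormalCDF t := by
    intro s t hst
    exact ENNReal.toReal_mono (measure_ne_top _ _)
      (measure_mono (Set.Iic_subset_Iic.mpr hst))
  apply hmono
  set a := ‖μd‖ ^ 2 with ha
  set b := ws ^ 2 * ‖μs‖ ^ 2 with hb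
  have hnd : ‖μd‖ ≠ 0 := norm_ne_zero_iff.mpr hμd
  have ha0 : 0 < a := by positivity
  have hb0 : 0 ≤ b := by positivity
  have hab : 0 < a + b := by linarith
  have key : (a + γ * b) / Real.sqrt (a + b) ≤ ‖μd‖ := by
    have hsqrt : (0:ℝ) < Real.sqrt (a + b) := Real.sqrt_pos.mpr hab
    rw [div_le_iff₀ hsqrt]
    have h1 : a + γ * b ≤ a := by nlinarith
    have h2 : ‖μd‖ ≤ Real.sqrt (a + b) := by
      rw [show ‖μd‖ = Real.sqrt a from (Real.sqrt_sq (norm_nonneg _)).symm]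
      exact Real.sqrt_le_sqrt (by linarith)
    calc a + γ * b ≤ a := h1
      _ = ‖μd‖ * ‖μd‖ := by rw [ha]; ring
      _ ≤ ‖μd‖ * Real.sqrt (a + b) := by
          exact mul_le_mul_of_nonneg_left h2 (norm_nonneg _)
  have hγb : γ * ws ^ 2 * ‖μs‖ ^ 2 = γ * b := by rw [hb]; ring
  rw [hγb, neg_div, neg_mul, neg_le_neg_iff, one_div]
  calc σ⁻¹ * ((a + γ * b) / Real.sqrt (a + b)) ≤ σ⁻¹ * ‖μd‖ :=
        mul_le_mul_of_nonneg_left key (by positivity)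
    _ = ‖μd‖ / σ := (div_eq_inv_mul _ _).symm
end

section
/- If γ > 1, then for all w_s ∈ (0,1], the test-domain risk satisfies R(1, w_s) := F(-(1/σ)·(‖μ_d‖₂² + γ·w_s²‖μ_s‖₂²)/√(‖μ_d‖₂² + w_s²‖μ_s‖₂²)) ≤ F(-‖μ_d‖₂/σ) = R(1, 0). That is, when the silent feature is more predictive at test time, preserving it yields test-domain risk no larger than the invariant featurizer, with strict inequality when μ_s ≠ 0. -/
open MeasureTheory ProbabilityTheory

lemma stdNormalCDF_mono {a b : ℝ} (h : a ≤ b) : stdNormalCDF a ≤ stdNormalCDF b :=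
  ENNReal.toReal_mono (measure_ne_top _ _) (measure_mono (Set.Iic_subset_Iic.mpr h))

lemma stdNormalCDF_strictMono {a b : ℝ} (h : a < b) : stdNormalCDF a < stdNormalCDF b := by
  have hne : (gaussianReal 0 1) (Set.Ioc a b) ≠ 0 := by
    intro h0
    have := (gaussianReal_absolutelyContinuous' 0 (by norm_num : (1 : NNReal) ≠ 0)) h0
    rw [Real.volume_Ioc] at this
    simp only [ENNReal.ofReal_eq_zero, sub_nonpos] at this
    linarith
  have hsplit : (gaussianReal 0 1) (Set.Iic b)
      = (gaussianReal 0 1) (Set.Iic a) + (gaussianReal 0 1) (Set.Ioc a b) := by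
    rw [← measure_union (Set.Iic_disjoint_Ioc le_rfl) measurableSet_Ioc,
      Set.Iic_union_Ioc_eq_Iic h.le]
  unfold stdNormalCDF
  rw [hsplit, ENNReal.toReal_add (measure_ne_top _ _) (measure_ne_top _ _)]
  have : 0 < ((gaussianReal 0 1) (Set.Ioc a b)).toReal :=
    ENNReal.toReal_pos hne (measure_ne_top _ _)
  linarith

/-- If `γ > 1`, then for all `w_s ∈ (0,1]` the test-domain risk
`R(1, w_s) = F(-(1/σ)·(‖μ_d‖² + γ w_s²‖μ_s‖²)/√(‖μ_d‖² + w_s²‖μ_s‖²))` satisfies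
`R(1, w_s) ≤ F(-‖μ_d‖/σ) = R(1, 0)`, with strict inequality when `μ_s ≠ 0`. -/
theorem preserve_silent_beats_invariant_of_gamma_gt_one
    (pd ps : ℕ) (μd : EuclideanSpace ℝ (Fin pd)) (μs : EuclideanSpace ℝ (Fin ps))
    (σ γ : ℝ) (hσ : 0 < σ) (hμd : μd ≠ 0) (hγ : 1 < γ) :
    ∀ ws ∈ Set.Ioc (0 : ℝ) 1,
      stdNormalCDF (-(1 / σ) * ((‖μd‖ ^ 2 + γ * ws ^ 2 * ‖μs‖ ^ 2)
            / Real.sqrt (‖μd‖ ^ 2 + ws ^ 2 * ‖μs‖ ^ 2)))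
        ≤ stdNormalCDF (-‖μd‖ / σ)
      ∧ (μs ≠ 0 →
        stdNormalCDF (-(1 / σ) * ((‖μd‖ ^ 2 + γ * ws ^ 2 * ‖μs‖ ^ 2)
            / Real.sqrt (‖μd‖ ^ 2 + ws ^ 2 * ‖μs‖ ^ 2)))
          < stdNormalCDF (-‖μd‖ / σ)) := by
  intro ws hws
  obtain ⟨hws0, hws1⟩ := hws
  set m := ‖μd‖ ^ 2 with hm
  set a := ws ^ 2 * ‖μs‖ ^ 2 with ha
  have hmpos : 0 < m := by
    have : 0 < ‖μd‖ := norm_pos_iff.mpr hμd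
    positivity
  have hanneg : 0 ≤ a := by positivity
  have hs : Real.sqrt (m + a) > 0 := Real.sqrt_pos.mpr (by linarith)
  have hsq : Real.sqrt (m + a) * Real.sqrt (m + a) = m + a :=
    Real.mul_self_sqrt (by linarith)
  have hsm : ‖μd‖ ≤ Real.sqrt (m + a) := by
    rw [hm] at *
    calc ‖μd‖ = Real.sqrt (‖μd‖ ^ 2) := by rw [Real.sqrt_sq (norm_nonneg _)]
    _ ≤ Real.sqrt (‖μd‖ ^ 2 + a) := Real.sqrt_le_sqrt (by linarith)
  -- key : ‖μd‖ ≤ (m + γ a)/√(m+a), strict if a > 0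
  have key : Real.sqrt (m + a) ≤ (m + γ * a) / Real.sqrt (m + a) := by
    rw [le_div_iff₀ hs, hsq]
    nlinarith
  have keystrict : 0 < a → ‖μd‖ < (m + γ * a) / Real.sqrt (m + a) := by
    intro hapos
    have : Real.sqrt (m + a) < (m + γ * a) / Real.sqrt (m + a) := by
      rw [lt_div_iff₀ hs, hsq]
      nlinarith
    linarith
  have hre : γ * ws ^ 2 * ‖μs‖ ^ 2 = γ * a := by rw [ha]; ring
  constructor
  · apply stdNormalCDF_mono
    have h1 : ‖μd‖ ≤ (m + γ * a) / Real.sqrt (m + a) := le_trans hsm key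
    rw [neg_mul, neg_div, neg_le_neg_iff, hre, one_div, inv_mul_eq_div]
    gcongr
  · intro hμs
    apply stdNormalCDF_strictMono
    have hapos : 0 < a := by
      have : 0 < ‖μs‖ := norm_pos_iff.mpr hμs
      positivity
    have h1 := keystrict hapos
    rw [neg_mul, neg_div, neg_lt_neg_iff, hre, one_div, inv_mul_eq_div]
    gcongr
end

section
/- In the Gaussian DG model with η = 1/2, common variance σ², and γ > 1, the map w_s ↦ g(w_s) := (‖μ_d‖₂² + γ·w_s²‖μ_s‖₂²)/√(‖μ_d‖₂² + w_s²‖μ_s‖₂²) is monotonically nondecreasing on [0,1]; consequently the test-domain risk R(1, w_s) = F(-g(w_s)/σ) is nonincreasing in w_s, so the featurizer fully preserving the silent feature (w_s = 1) minimizes the test risk among {Φ_{(1,w_s)} : w_s ∈ [0,1]}. -/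
open MeasureTheory ProbabilityTheory

lemma stdNormalCDF_mono_s8 : Monotone stdNormalCDF := by
  intro a b hab
  unfold stdNormalCDF
  exact ENNReal.toReal_mono (measure_ne_top _ _)
    (measure_mono (Set.Iic_subset_Iic.mpr hab))

lemma key (A γ : ℝ) (hA : 0 < A) (hγ : 1 < γ) {t u : ℝ} (ht : 0 ≤ t) (htu : t ≤ u) :
    (A + γ * t) / Real.sqrt (A + t) ≤ (A + γ * u) / Real.sqrt (A + u) := by
  have h1 : 0 < A + t := by linarith
  have h2 : 0 < A + u := by linarith
  have hs : 0 < Real.sqrt (A + t) := Real.sqrt_pos.mpr h1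
  have hr : 0 < Real.sqrt (A + u) := Real.sqrt_pos.mpr h2
  have hs2 : Real.sqrt (A + t) ^ 2 = A + t := Real.sq_sqrt h1.le
  have hr2 : Real.sqrt (A + u) ^ 2 = A + u := Real.sq_sqrt h2.le
  have hsr : Real.sqrt (A + t) ≤ Real.sqrt (A + u) :=
    Real.sqrt_le_sqrt (by linarith)
  rw [div_le_div_iff₀ hs hr]
  have hprod : 0 ≤ (Real.sqrt (A + u) - Real.sqrt (A + t)) *
      (γ * Real.sqrt (A + t) * Real.sqrt (A + u) + (γ - 1) * A) := by
    have : 0 ≤ γ * Real.sqrt (A + t) * Real.sqrt (A + u) + (γ - 1) * A := by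
      have h3 : 0 < γ := by linarith
      nlinarith [mul_pos (mul_pos h3 hs) hr]
    exact mul_nonneg (sub_nonneg.mpr hsr) this
  have e1 : Real.sqrt (A + t) ^ 2 * Real.sqrt (A + u) = (A + t) * Real.sqrt (A + u) := by
    rw [hs2]
  have e2 : Real.sqrt (A + u) ^ 2 * Real.sqrt (A + t) = (A + u) * Real.sqrt (A + t) := by
    rw [hr2]
  nlinarith [hprod, e1, e2]

/-- For `γ > 1`, the map `w_s ↦ g(w_s) = (‖μ_d‖² + γ w_s²‖μ_s‖²)/√(‖μ_d‖² + w_s²‖μ_s‖²)`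
is nondecreasing on `[0,1]`; hence the test risk `R(1, w_s) = F(-g(w_s)/σ)` is nonincreasing
in `w_s`, and `w_s = 1` minimizes the test risk among `{Φ_{(1,w_s)} : w_s ∈ [0,1]}`. -/
theorem test_risk_antitone_of_gamma_gt_one
    (pd ps : ℕ) (μd : EuclideanSpace ℝ (Fin pd)) (μs : EuclideanSpace ℝ (Fin ps))
    (σ γ : ℝ) (hσ : 0 < σ) (hμd : μd ≠ 0) (hγ : 1 < γ) :
    MonotoneOn (fun ws : ℝ => (‖μd‖ ^ 2 + γ * ws ^ 2 * ‖μs‖ ^ 2)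
        / Real.sqrt (‖μd‖ ^ 2 + ws ^ 2 * ‖μs‖ ^ 2)) (Set.Icc 0 1)
      ∧ AntitoneOn (fun ws : ℝ => stdNormalCDF (-((‖μd‖ ^ 2 + γ * ws ^ 2 * ‖μs‖ ^ 2)
          / Real.sqrt (‖μd‖ ^ 2 + ws ^ 2 * ‖μs‖ ^ 2)) / σ)) (Set.Icc 0 1)
      ∧ ∀ ws ∈ Set.Icc (0 : ℝ) 1,
          stdNormalCDF (-((‖μd‖ ^ 2 + γ * 1 ^ 2 * ‖μs‖ ^ 2)
              / Real.sqrt (‖μd‖ ^ 2 + 1 ^ 2 * ‖μs‖ ^ 2)) / σ)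
            ≤ stdNormalCDF (-((‖μd‖ ^ 2 + γ * ws ^ 2 * ‖μs‖ ^ 2)
              / Real.sqrt (‖μd‖ ^ 2 + ws ^ 2 * ‖μs‖ ^ 2)) / σ) := by
  have hA : 0 < ‖μd‖ ^ 2 := by
    have := norm_pos_iff.mpr hμd
    positivity
  have hg : MonotoneOn (fun ws : ℝ => (‖μd‖ ^ 2 + γ * ws ^ 2 * ‖μs‖ ^ 2)
      / Real.sqrt (‖μd‖ ^ 2 + ws ^ 2 * ‖μs‖ ^ 2)) (Set.Icc 0 1) := by
    intro a ha b hb hab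
    simp only [mul_assoc]
    have h1 : 0 ≤ a ^ 2 * ‖μs‖ ^ 2 := by positivity
    have h2 : a ^ 2 * ‖μs‖ ^ 2 ≤ b ^ 2 * ‖μs‖ ^ 2 := by
      have : a ^ 2 ≤ b ^ 2 := by nlinarith [ha.1, hb.1]
      nlinarith [sq_nonneg ‖μs‖]
    exact key _ γ hA hγ h1 h2
  refine ⟨hg, ?_, ?_⟩
  · intro a ha b hb hab
    apply stdNormalCDF_mono_s8
    have := hg ha hb hab
    have hgab : -((‖μd‖ ^ 2 + γ * b ^ 2 * ‖μs‖ ^ 2) / Real.sqrt (‖μd‖ ^ 2 + b ^ 2 * ‖μs‖ ^ 2))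
        ≤ -((‖μd‖ ^ 2 + γ * a ^ 2 * ‖μs‖ ^ 2) / Real.sqrt (‖μd‖ ^ 2 + a ^ 2 * ‖μs‖ ^ 2)) := by
      simpa using this
    exact div_le_div_of_nonneg_right hgab hσ.le
  · intro ws hws
    apply stdNormalCDF_mono_s8
    have := hg hws (Set.mem_Icc.mpr ⟨zero_le_one, le_refl 1⟩) hws.2
    have h := neg_le_neg this
    exact div_le_div_of_nonneg_right h hσ.le
end
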